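/- Let f : G → Aut^0(G) be a group homomorphism and let g : G → G be a map satisfying g(στ) = g(σ)·f(σ)(g(τ)) for all σ, τ ∈ G. For each k ∈ {1,…,r} fix a representative i_k ∈ X_k, and for each i ∈ X_k choose σ_i ∈ H with f_{S_n}(σ_i)(i_k) = i. Suppose that for every i ∈ {1,…,n}∖X_0 the element σ_i commutes with every element of ker(f_{S_n}), and suppose that f(ker(f_{S_n})) ⊆ Inn(G). Then the image g(ker(f_{S_n})) has cardinality at most |T|^(#X_0 + 2r). -/

import Mathlib

/-!
STATEMENT 14: Let `f : G → Aut⁰(G)` be a homomorphism and `g : G → G` a map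
with `g(στ) = g(σ)·f(σ)(g(τ))`.  For each `k ∈ {1, …, r}` fix a representative
`i_k ∈ X_k`, and for each `i ∈ X_k` choose `σ_i ∈ H` with `f_{Sₙ}(σ_i)(i_k) = i`.
Suppose each such `σ_i` (for `i ∉ X_0`) commutes with every element of
`ker(f_{Sₙ})`, and that `f(ker(f_{Sₙ})) ⊆ Inn(G)`.  Then
`#g(ker(f_{Sₙ})) ≤ |T|^(#X_0 + 2r)`.

Setting: `n ≥ 1`, `T` a nontrivial finite group, `G = Tⁿ = (Fin n → T)`.
That `f` takes values in `Aut⁰(G) = Aut(T) wr Sₙ` is encoded by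
`Θ : G →* Equiv.Perm (Fin n)` (which is `f_{Sₙ}`) and `Φ σ i ∈ Aut(T)` with
`f(σ)(x)ᵢ = Φ σ i (x_{(Θ σ)⁻¹ i})`.  `p` is a prime dividing `|T|`, each
`P i ≤ T` has order `p`, and `H = P⁽¹⁾ × ⋯ × P⁽ⁿ⁾ ≤ G`.  Under the action of
`f_{Sₙ}(H)` on `{1, …, n}` (i.e. `i` is moved to `Θ σ i` for `σ ∈ H`), `X_0`
is the set of fixed points and `X 1, …, X r` are the orbits of size `> 1`
(they are pairwise distinct orbits, each of size `> 1`, covering all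
non-fixed points).  `Inn(G)` is the range of `MulAut.conj`.
-/

theorem g_image_of_kernel_bound
    (n : ℕ) (hn : 1 ≤ n) (T : Type*) [Group T] [Finite T] [Nontrivial T]
    (f : (Fin n → T) →* MulAut (Fin n → T))
    (Θ : (Fin n → T) →* Equiv.Perm (Fin n))
    (Φ : (Fin n → T) → Fin n → MulAut T)
    (hfΘΦ : ∀ (σ : Fin n → T) (x : Fin n → T) (i : Fin n),
      f σ x i = Φ σ i (x ((Θ σ)⁻¹ i)))
    (g : (Fin n → T) → (Fin n → T))
    (hg : ∀ σ τ : Fin n → T, g (σ * τ) = g σ * f σ (g τ))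
    (p : ℕ) (hp : p.Prime) (hpT : p ∣ Nat.card T)
    (P : Fin n → Subgroup T) (hP : ∀ i, Nat.card (P i) = p)
    (H : Subgroup (Fin n → T)) (hH : H = Subgroup.pi Set.univ P)
    (X0 : Set (Fin n)) (hX0 : X0 = {i : Fin n | ∀ σ ∈ H, Θ σ i = i})
    (r : ℕ) (X : Fin r → Set (Fin n))
    (hXorb : ∀ k, ∃ i₀ ∈ X k, X k = {j : Fin n | ∃ σ ∈ H, Θ σ i₀ = j})
    (hXsize : ∀ k, 1 < Nat.card (X k))
    (hXinj : Function.Injective X)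
    (hXcover : ∀ i : Fin n, i ∉ X0 → ∃ k, i ∈ X k)
    (idx : Fin r → Fin n) (hidx : ∀ k, idx k ∈ X k)
    (sel : Fin n → (Fin n → T))
    (hsel : ∀ k, ∀ i ∈ X k, sel i ∈ H ∧ Θ (sel i) (idx k) = i)
    (hcomm : ∀ i : Fin n, i ∉ X0 → ∀ τ ∈ Θ.ker, Commute (sel i) τ)
    (hinn : ∀ τ ∈ Θ.ker,
      f τ ∈ (MulAut.conj : (Fin n → T) →* MulAut (Fin n → T)).range) :
    Nat.card (g '' (Θ.ker : Set (Fin n → T))) ≤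
      Nat.card T ^ (Nat.card X0 + 2 * r) := by
  classical
  -- choose a conjugating element for each kernel element
  have hc' : ∀ τ : Fin n → T, ∃ x : Fin n → T, τ ∈ Θ.ker → MulAut.conj x = f τ := by
    intro τ
    by_cases h : τ ∈ Θ.ker
    · obtain ⟨x, hx⟩ := hinn τ h
      exact ⟨x, fun _ => hx⟩
    · exact ⟨1, fun h' => absurd h' h⟩
  choose c hc using hc'
  -- orbits of size > 1 consist of non-fixed points
  have hdisj : ∀ k : Fin r, ∀ i ∈ X k, i ∉ X0 := by
    intro k i hi hi0
    obtain ⟨i₀, hi₀, hXk⟩ := hXorb k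
    have hi0' : ∀ σ ∈ H, Θ σ i = i := by rw [hX0] at hi0; exact hi0
    rw [hXk] at hi
    obtain ⟨σ, hσH, hσ⟩ := hi
    have hsub : ∀ j ∈ X k, j = i := by
      intro j hj
      rw [hXk] at hj
      obtain ⟨σ', hσ'H, hσ'⟩ := hj
      have h1 : σ' * σ⁻¹ ∈ H := mul_mem hσ'H (inv_mem hσH)
      have h2 : Θ (σ' * σ⁻¹) i = i := hi0' _ h1
      have h3 : (Θ σ)⁻¹ i = i₀ := by rw [← hσ]; exact Equiv.symm_apply_apply _ _
      rw [map_mul, map_inv, Equiv.Perm.mul_apply] at h2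
      rw [h3, hσ'] at h2
      exact h2
    have hle : Nat.card (X k) ≤ 1 := by
      rw [Nat.card_coe_set_eq]
      exact (Set.ncard_le_one_iff (Set.toFinite _)).mpr
        (fun ha hb => (hsub _ ha).trans (hsub _ hb).symm)
    exact absurd hle (not_le.mpr (hXsize k))
  -- the key pointwise formula
  have key : ∀ τ ∈ Θ.ker, ∀ k : Fin r, ∀ i ∈ X k,
      g τ i = g (sel i) i * Φ (sel i) i (g τ (idx k)) *
        Φ (sel i) i (c τ (idx k)) * (g (sel i) i)⁻¹ *
        (Φ (sel i) i (c τ (idx k)))⁻¹ := by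
    intro τ hτ k i hi
    obtain ⟨hσH, hσΘ⟩ := hsel k i hi
    have hiX0 : i ∉ X0 := hdisj k i hi
    have hcm : sel i * τ = τ * sel i := (hcomm i hiX0 τ hτ).eq
    have hidx' : (Θ (sel i))⁻¹ i = idx k := by
      apply (Θ (sel i)).injective
      rw [show Θ (sel i) ((Θ (sel i))⁻¹ i) = i from Equiv.apply_symm_apply _ _, hσΘ]
    -- the cocycle relation at coordinate i
    have e1 : g (sel i) * f (sel i) (g τ) = g τ * f τ (g (sel i)) := by
      rw [← hg, ← hg, hcm]
    have e1i : g (sel i) i * Φ (sel i) i (g τ (idx k)) =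
        g τ i * (c τ i * g (sel i) i * (c τ i)⁻¹) := by
      have h0 := congrFun e1 i
      rw [← hc τ hτ] at h0
      simpa [Pi.mul_apply, Pi.inv_apply, hfΘΦ, hidx', MulAut.conj_apply] using h0
    -- conjugation by c τ i agrees with conjugation by Φ (sel i) i (c τ (idx k))
    have e2 : ∀ y : T, Φ (sel i) i (c τ (idx k)) * y * (Φ (sel i) i (c τ (idx k)))⁻¹
        = c τ i * y * (c τ i)⁻¹ := by
      intro y
      have hco : sel i * τ * (sel i)⁻¹ = τ := by rw [hcm]; group
      have hfc : f (sel i) * f τ * (f (sel i))⁻¹ = f τ := by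
        rw [← map_inv, ← map_mul, ← map_mul, hco]
      have h3 : (f (sel i) * f τ * (f (sel i))⁻¹) ((fun _ => y) : Fin n → T)
          = f τ (fun _ => y) := by rw [hfc]
      rw [MulAut.mul_apply, MulAut.mul_apply, ← hc τ hτ, MulAut.conj_apply,
        MulAut.conj_apply, map_mul, map_mul, map_inv,
        MulAut.apply_inv_self] at h3
      -- h3 : f (sel i) (c τ) * (fun _ => y) * (f (sel i) (c τ))⁻¹ = c τ * (fun _ => y) * (c τ)⁻¹
      have h4 := congrFun h3 i
      simpa [Pi.mul_apply, Pi.inv_apply, hfΘΦ, hidx'] using h4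
    set A := g (sel i) i with hA
    set B := c τ i with hB
    set D := Φ (sel i) i (c τ (idx k)) with hD
    set u := Φ (sel i) i (g τ (idx k)) with hu
    have eB : D * A⁻¹ * D⁻¹ = B * A⁻¹ * B⁻¹ := e2 A⁻¹
    have h5 : g τ i = A * u * (B * A * B⁻¹)⁻¹ := by
      rw [e1i]; group
    calc g τ i = A * u * (B * A * B⁻¹)⁻¹ := h5
      _ = A * u * (B * A⁻¹ * B⁻¹) := by group
      _ = A * u * (D * A⁻¹ * D⁻¹) := by rw [← eB]
      _ = A * u * D * A⁻¹ * D⁻¹ := by group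
  -- choose preimages of elements of the image
  have hpre : ∀ y : (g '' (Θ.ker : Set (Fin n → T))),
      ∃ τ, τ ∈ Θ.ker ∧ g τ = (y : Fin n → T) := fun y => y.2
  choose pre hpreK hpreg using hpre
  -- the injection
  set Ψ : (g '' (Θ.ker : Set (Fin n → T))) → (X0 → T) × (Fin r → T × T) :=
    fun y => (fun i => (y : Fin n → T) i.1,
      fun k => ((y : Fin n → T) (idx k), c (pre y) (idx k))) with hΨdef
  have hΨ : Function.Injective Ψ := by
    intro y y' h
    have h1 := congrArg Prod.fst h
    have h2 := congrArg Prod.snd h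
    apply Subtype.ext
    funext i
    by_cases hi0 : i ∈ X0
    · exact congrFun h1 ⟨i, hi0⟩
    · obtain ⟨k, hik⟩ := hXcover i hi0
      have hk := congrFun h2 k
      have ha : (y : Fin n → T) (idx k) = (y' : Fin n → T) (idx k) :=
        congrArg Prod.fst hk
      have hb : c (pre y) (idx k) = c (pre y') (idx k) := congrArg Prod.snd hk
      have k1 := key (pre y) (hpreK y) k i hik
      have k2 := key (pre y') (hpreK y') k i hik
      rw [hpreg y] at k1
      rw [hpreg y'] at k2
      rw [k1, k2, ha, hb]
  have hcard := Nat.card_le_card_of_injective Ψ hΨ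
  have hT : Nat.card ((X0 → T) × (Fin r → T × T))
      = Nat.card T ^ (Nat.card X0 + 2 * r) := by
    rw [Nat.card_prod, Nat.card_fun, Nat.card_fun, Nat.card_prod,
      Nat.card_eq_fintype_card (α := Fin r), Fintype.card_fin]
    rw [pow_add, pow_mul, sq]
  rw [hT] at hcard
  exact hcard
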